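/- Let V be a variety of τ-algebras. The assignments K ↦ B^K and B ↦ K^B establish a one-to-one correspondence between the subclasses of V_fg closed under finitely generated subalgebras of finite products and the subfamilies of Con(F^V) closed under inverse substitution and finite intersection. -/

import Mathlib

/-! Universal-algebra preamble: functional signatures, algebras (with nonempty
carriers, as usual in universal algebra), terms, homomorphisms, congruences,
quotients, free algebras, and the operators/uniformities of the paper.

Families indexed over the components of a clone are indexed by `k : ℕ`, where
index `k` stands for the component of arity `k + 1` (so all arities `≥ 1`). -/

/-- A functional signature: a type of function symbols together with arities. -/
structure Signature : Type 1 where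
  F : Type
  arity : F → ℕ

/-- A τ-algebra: a nonempty carrier together with an interpretation of each symbol. -/
structure Alg (σ : Signature) : Type 1 where
  carrier : Type
  nonempty : Nonempty carrier
  op : ∀ f : σ.F, (Fin (σ.arity f) → carrier) → carrier

/-- Abstract τ-terms over the variables x_1, …, x_n. -/
inductive Trm (σ : Signature) (n : ℕ) : Type
  | var : Fin n → Trm σ n
  | app : ∀ f : σ.F, (Fin (σ.arity f) → Trm σ n) → Trm σ n

variable {σ : Signature}

/-- Evaluation of a term in an algebra under a valuation of the variables. -/
def Trm.eval {n : ℕ} (A : Alg σ) (v : Fin n → A.carrier) : Trm σ n → A.carrier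
  | .var i => v i
  | .app f ts => A.op f fun i => Trm.eval A v (ts i)

/-- The term operation `t^A` induced on `A` by the term `t`. -/
def termOp {n : ℕ} (A : Alg σ) (t : Trm σ n) : (Fin n → A.carrier) → A.carrier :=
  fun v => t.eval A v

/-- Homomorphisms of τ-algebras. -/
def IsHom (A B : Alg σ) (h : A.carrier → B.carrier) : Prop :=
  ∀ (f : σ.F) (x : Fin (σ.arity f) → A.carrier), h (A.op f x) = B.op f fun i => h (x i)

/-- Isomorphism of τ-algebras. -/
def Isomorphic (A B : Alg σ) : Prop :=
  ∃ h : A.carrier → B.carrier, IsHom A B h ∧ Function.Bijective h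

/-- Membership in the subuniverse generated by `S`. -/
inductive InClosure (A : Alg σ) (S : Set A.carrier) : A.carrier → Prop
  | base : ∀ a ∈ S, InClosure A S a
  | app : ∀ (f : σ.F) (x : Fin (σ.arity f) → A.carrier),
      (∀ i, InClosure A S (x i)) → InClosure A S (A.op f x)

/-- An algebra is finitely generated if a finite subset generates it. -/
def FinGen (A : Alg σ) : Prop :=
  ∃ S : Set A.carrier, S.Finite ∧ ∀ a, InClosure A S a

/-- Product of a family of algebras. -/
def PiAlg {ι : Type} (A : ι → Alg σ) : Alg σ where
  carrier := ∀ i, (A i).carrier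
  nonempty := ⟨fun i => Classical.choice (A i).nonempty⟩
  op f x := fun i => (A i).op f fun j => x j i

/-- A congruence: an equivalence relation compatible with all operations. -/
def IsCongruence (A : Alg σ) (r : A.carrier → A.carrier → Prop) : Prop :=
  Equivalence r ∧ ∀ (f : σ.F) (x y : Fin (σ.arity f) → A.carrier),
    (∀ i, r (x i) (y i)) → r (A.op f x) (A.op f y)

/-- Bundled congruences on an algebra. -/
structure Cong (A : Alg σ) : Type where
  r : A.carrier → A.carrier → Prop
  iscon : IsCongruence A r

/-- The quotient algebra of `A` by (a relation which is intended to be) a congruence. -/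
noncomputable def quotAlg (A : Alg σ) (r : A.carrier → A.carrier → Prop) : Alg σ where
  carrier := Quot r
  nonempty := ⟨Quot.mk r (Classical.choice A.nonempty)⟩
  op f x := Quot.mk r (A.op f fun i => (x i).out)

/-- The subalgebra of `A` on a nonempty subset closed under the operations. -/
def subAlg (A : Alg σ) (S : Set A.carrier) (hne : S.Nonempty)
    (hcl : ∀ (f : σ.F) (x : Fin (σ.arity f) → A.carrier), (∀ i, x i ∈ S) → A.op f x ∈ S) :
    Alg σ where
  carrier := {a : A.carrier // a ∈ S}
  nonempty := ⟨⟨hne.choose, hne.choose_spec⟩⟩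
  op f x := ⟨A.op f fun i => (x i).1, hcl f _ fun i => (x i).2⟩

/-- The subalgebra of `A` generated by a nonempty subset `S`. -/
def genSubAlg (A : Alg σ) (S : Set A.carrier) (hne : S.Nonempty) : Alg σ where
  carrier := {a : A.carrier // InClosure A S a}
  nonempty := ⟨⟨hne.choose, InClosure.base _ hne.choose_spec⟩⟩
  op f x := ⟨A.op f fun i => (x i).1, InClosure.app f _ fun i => (x i).2⟩

/-- H: homomorphic images of members of `K`. -/
def Hcl (K : Set (Alg σ)) : Set (Alg σ) :=
  {B | ∃ A ∈ K, ∃ h : A.carrier → B.carrier, IsHom A B h ∧ Function.Surjective h}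

/-- I: isomorphic copies of members of `K`. -/
def Icl (K : Set (Alg σ)) : Set (Alg σ) := {B | ∃ A ∈ K, Isomorphic A B}

/-- S: isomorphic copies of subalgebras (i.e. algebras embedding into members) of `K`. -/
def Scl (K : Set (Alg σ)) : Set (Alg σ) :=
  {B | ∃ A ∈ K, ∃ e : B.carrier → A.carrier, IsHom B A e ∧ Function.Injective e}

/-- P_f: isomorphic copies of finite (nonempty) products of members of `K`. -/
def Pfcl (K : Set (Alg σ)) : Set (Alg σ) :=
  {B | ∃ (n : ℕ) (A : Fin (n + 1) → Alg σ), (∀ i, A i ∈ K) ∧ Isomorphic (PiAlg A) B}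

/-- S_f: isomorphic copies of finitely generated subalgebras of members of `K`. -/
def Sf (K : Set (Alg σ)) : Set (Alg σ) :=
  {B | FinGen B ∧ ∃ A ∈ K, ∃ e : B.carrier → A.carrier, IsHom B A e ∧ Function.Injective e}

/-- S P_f: isomorphic copies of finitely generated subalgebras of finite products
of members of `K`. -/
def SPf (K : Set (Alg σ)) : Set (Alg σ) :=
  {B | FinGen B ∧ ∃ (n : ℕ) (A : Fin (n + 1) → Alg σ), (∀ i, A i ∈ K) ∧
    ∃ e : B.carrier → (PiAlg A).carrier, IsHom B (PiAlg A) e ∧ Function.Injective e}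

/-- A pseudovariety of finitely generated algebras: a class of finitely generated
algebras closed under homomorphic images and under isomorphic copies of finitely
generated subalgebras of finite products of its members. -/
def IsPseudovarietyFG (C : Set (Alg σ)) : Prop :=
  (∀ A ∈ C, FinGen A) ∧ Hcl C ⊆ C ∧ SPf C ⊆ C

/-- A pseudovariety of finite algebras: a class of finite algebras closed under
finite products, subalgebras and homomorphic images. -/
def IsPseudovarietyFin (C : Set (Alg σ)) : Prop :=
  (∀ A ∈ C, Finite A.carrier) ∧ Hcl C ⊆ C ∧ Scl C ⊆ C ∧ Pfcl C ⊆ C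

/-- A variety: a class closed under arbitrary products, subalgebras and
homomorphic images. -/
def IsVariety (V : Set (Alg σ)) : Prop :=
  (∀ (ι : Type) (A : ι → Alg σ), (∀ i, A i ∈ V) → PiAlg A ∈ V) ∧
  Scl V ⊆ V ∧ Hcl V ⊆ V

/-- The identities of the class `C`: `s` and `t` are identified iff they induce the
same operation on every member of `C`. -/
def FreeCon (C : Set (Alg σ)) (n : ℕ) : Trm σ n → Trm σ n → Prop :=
  fun s t => ∀ A ∈ C, ∀ v : Fin n → A.carrier, s.eval A v = t.eval A v

/-- `freeAlg C k` is `F_{k+1}^C`, the free algebra for `C` on `k + 1` generators: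
the term algebra on the variables `x_1, …, x_{k+1}` modulo the identities of `C`.
(The index `k` stands for arity `k + 1`, so all components have arity `≥ 1`.) -/
noncomputable def freeAlg (C : Set (Alg σ)) (k : ℕ) : Alg σ where
  carrier := Quot (FreeCon C (k + 1))
  nonempty := ⟨Quot.mk _ (Trm.var 0)⟩
  op f x := Quot.mk _ (Trm.app f fun i => (x i).out)

/-- The finitely generated members of `V`. -/
def Vfg (V : Set (Alg σ)) : Set (Alg σ) := {A | A ∈ V ∧ FinGen A}

/-- `B^K`: the congruences of the free algebras whose quotient is isomorphic to a
member of `K`. -/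
def BK (V K : Set (Alg σ)) (k : ℕ) : Set (Cong (freeAlg V k)) :=
  {θ | quotAlg (freeAlg V k) θ.r ∈ Icl K}

/-- `K^B`: isomorphic copies of the quotients of free algebras by congruences in `B`. -/
def KB (V : Set (Alg σ)) (B : ∀ k : ℕ, Set (Cong (freeAlg V k))) : Set (Alg σ) :=
  Icl {A | ∃ (k : ℕ), ∃ θ ∈ B k, A = quotAlg (freeAlg V k) θ.r}

/-- `θ/t̄`: the inverse substitution of the congruence `θ` along the tuple `t̄`;
`s (θ/t̄) s'` iff `s(t₁,…,t_m) θ s'(t₁,…,t_m)`. -/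
noncomputable def conSubstRel {V : Set (Alg σ)} {k : ℕ} (θ : Cong (freeAlg V k)) {m : ℕ}
    (t : Fin (m + 1) → (freeAlg V k).carrier) :
    (freeAlg V m).carrier → (freeAlg V m).carrier → Prop :=
  fun s s' => θ.r (Trm.eval (freeAlg V k) t s.out) (Trm.eval (freeAlg V k) t s'.out)

/-- A family of congruences is closed under inverse substitution. -/
def InvSubstClosed (V : Set (Alg σ)) (B : ∀ k : ℕ, Set (Cong (freeAlg V k))) : Prop :=
  ∀ (k m : ℕ), ∀ θ ∈ B k, ∀ t : Fin (m + 1) → (freeAlg V k).carrier,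
    ∃ θ' ∈ B m, θ'.r = conSubstRel θ t

/-- A family of congruences is closed under finite intersections (componentwise). -/
def InterClosed (V : Set (Alg σ)) (B : ∀ k : ℕ, Set (Cong (freeAlg V k))) : Prop :=
  ∀ (k n : ℕ) (θs : Fin (n + 1) → Cong (freeAlg V k)), (∀ i, θs i ∈ B k) →
    ∃ θ' ∈ B k, θ'.r = fun a b => ∀ i, (θs i).r a b

/-- A family of congruences is upward closed (componentwise). -/
def UpClosed (V : Set (Alg σ)) (B : ∀ k : ℕ, Set (Cong (freeAlg V k))) : Prop :=
  ∀ (k : ℕ), ∀ θ ∈ B k, ∀ ψ : Cong (freeAlg V k), (∀ a b, θ.r a b → ψ.r a b) → ψ ∈ B k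

/-- A filter on `X × X` is a uniformity: every entourage contains the diagonal, the
converse of an entourage is an entourage, and the generalised triangle inequality. -/
def IsUniformity {X : Type} (u : Filter (X × X)) : Prop :=
  (∀ U ∈ u, ∀ x : X, (x, x) ∈ U) ∧
  (∀ U ∈ u, {p : X × X | (p.2, p.1) ∈ U} ∈ u) ∧
  (∀ U ∈ u, ∃ W ∈ u, ∀ x y z : X, (x, y) ∈ W → (y, z) ∈ W → (x, z) ∈ U)

/-- `U^C` (the component of index `k`, i.e. of arity `k + 1`): the filter on
`F_{k+1}^V × F_{k+1}^V` generated by the congruences `θ` of `F_{k+1}^V` such that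
`F_{k+1}^V/θ` is isomorphic to a member of `C`. -/
noncomputable def unifC (V C : Set (Alg σ)) (k : ℕ) :
    Filter ((freeAlg V k).carrier × (freeAlg V k).carrier) :=
  Filter.generate
    {U | ∃ θ : Cong (freeAlg V k), quotAlg (freeAlg V k) θ.r ∈ Icl C ∧ U = {p | θ.r p.1 p.2}}

/-- The `(k+1)`-ary part of `Clo(A)`: the `(k+1)`-ary term operations of `A`. -/
def CloK (A : Alg σ) (k : ℕ) : Type :=
  {g : (Fin (k + 1) → A.carrier) → A.carrier // ∃ t : Trm σ (k + 1), g = termOp A t}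

/-- The uniformity of pointwise convergence on the `(k+1)`-ary part of `Clo(A)`:
generated by the sets `U_ā = {(f, g) | f(ā) = g(ā)}`. -/
noncomputable def ptwUnif (A : Alg σ) (k : ℕ) : Filter (CloK A k × CloK A k) :=
  Filter.generate {U | ∃ a : Fin (k + 1) → A.carrier, U = {p | p.1.1 a = p.2.1 a}}

/-- The natural map from the free algebra for `C` onto `Clo(A)`, sending the class
of a term `t` to the term operation `t^A`. -/
noncomputable def natMap (C : Set (Alg σ)) (A : Alg σ) (k : ℕ) :
    (freeAlg C k).carrier → CloK A k :=
  fun q => ⟨termOp A q.out, q.out, rfl⟩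

/-- The natural map between the free algebras of two classes (class of `t` to
class of `t`). -/
noncomputable def freeNatMap (C D : Set (Alg σ)) (k : ℕ) :
    (freeAlg C k).carrier → (freeAlg D k).carrier :=
  fun q => Quot.mk _ q.out

/-- The natural map `Clo(A) → Clo(B)`, sending `t^A` to `t^B`. -/
noncomputable def cloNatMap (A B : Alg σ) (k : ℕ) : CloK A k → CloK B k :=
  fun g => ⟨termOp B (Classical.choose g.2), Classical.choose g.2, rfl⟩

/-- The variety generated by `A`. -/
def varietyGen (A : Alg σ) : Set (Alg σ) :=
  {B | ∀ V : Set (Alg σ), IsVariety V → A ∈ V → B ∈ V}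

/-- The pseudovariety generated by `A`: the smallest class containing `A` closed
under finite products, subalgebras and homomorphic images. -/
def psvGen (A : Alg σ) : Set (Alg σ) :=
  {B | ∀ C : Set (Alg σ), A ∈ C → Hcl C ⊆ C → Scl C ⊆ C → Pfcl C ⊆ C → B ∈ C}

/-- The pseudovariety of finitely generated algebras generated by `A`: the finitely
generated members of the pseudovariety generated by `A`. -/
def psvFgGen (A : Alg σ) : Set (Alg σ) := {B | FinGen B ∧ B ∈ psvGen A}


section CorrespondenceProof

variable {σ : Signature}

theorem isHom_comp {A B C : Alg σ} {h : A.carrier → B.carrier} {g : B.carrier → C.carrier}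
    (hh : IsHom A B h) (hg : IsHom B C g) : IsHom A C (g ∘ h) := by
  intro f x
  show g (h (A.op f x)) = _
  rw [hh, hg]
  rfl

theorem iso_refl (A : Alg σ) : Isomorphic A A :=
  ⟨id, fun _ _ => rfl, Function.bijective_id⟩

theorem isHom_inv {A B : Alg σ} {h : A.carrier → B.carrier}
    (hh : IsHom A B h) (hb : Function.Bijective h) :
    ∃ g : B.carrier → A.carrier, IsHom B A g ∧ Function.Bijective g ∧
      (∀ b, h (g b) = b) ∧ (∀ a, g (h a) = a) := by
  let e := Equiv.ofBijective h hb
  have hre : ∀ y, h (e.symm y) = y := fun y => e.apply_symm_apply y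
  refine ⟨e.symm, ?_, e.symm.bijective, hre, fun a => e.symm_apply_apply a⟩
  intro f x
  apply hb.1
  rw [hre, hh]
  congr 1
  funext i
  rw [hre]

theorem iso_symm {A B : Alg σ} (h : Isomorphic A B) : Isomorphic B A := by
  obtain ⟨f, hf, hfb⟩ := h
  obtain ⟨g, hg, hgb, -, -⟩ := isHom_inv hf hfb
  exact ⟨g, hg, hgb⟩

theorem iso_trans {A B C : Alg σ} (h₁ : Isomorphic A B) (h₂ : Isomorphic B C) :
    Isomorphic A C := by
  obtain ⟨f, hf, hfb⟩ := h₁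
  obtain ⟨g, hg, hgb⟩ := h₂
  exact ⟨g ∘ f, isHom_comp hf hg, hgb.comp hfb⟩

theorem quot_mk_eq_iff {α : Type} {r : α → α → Prop} (h : Equivalence r) {a b : α} :
    Quot.mk r a = Quot.mk r b ↔ r a b := by
  rw [Quot.eq]; exact h.eqvGen_iff

theorem quot_out_rel {α : Type} {r : α → α → Prop} (h : Equivalence r) (a : α) :
    r (Quot.mk r a).out a := (quot_mk_eq_iff h).mp (Quot.out_eq _)

theorem quot_mk_surj {α : Type} {r : α → α → Prop} : Function.Surjective (Quot.mk r) :=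
  fun q => ⟨q.out, q.out_eq⟩

theorem ker_isCong {A B : Alg σ} {h : A.carrier → B.carrier} (hh : IsHom A B h) :
    IsCongruence A fun a b => h a = h b := by
  refine ⟨⟨fun _ => rfl, Eq.symm, Eq.trans⟩, fun f x y hxy => ?_⟩
  show h (A.op f x) = h (A.op f y)
  rw [hh, hh]
  exact congrArg _ (funext hxy)

theorem quot_mk_isHom {A : Alg σ} {r : A.carrier → A.carrier → Prop} (hr : IsCongruence A r) :
    IsHom A (quotAlg A r) (Quot.mk r) := by
  intro f x
  show Quot.mk r (A.op f x) = Quot.mk r (A.op f fun i => (Quot.mk r (x i)).out)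
  exact (quot_mk_eq_iff hr.1).mpr (hr.2 _ _ _ fun i => hr.1.symm (quot_out_rel hr.1 (x i)))

theorem firstIso_mk {A B : Alg σ} {h : A.carrier → B.carrier} (hh : IsHom A B h)
    (a : A.carrier) : h (Quot.mk (fun a b => h a = h b) a).out = h a :=
  quot_out_rel (ker_isCong hh).1 a

theorem firstIso_isHom {A B : Alg σ} {h : A.carrier → B.carrier} (hh : IsHom A B h) :
    IsHom (quotAlg A fun a b => h a = h b) B fun q => h q.out := by
  intro f x
  show h (Quot.mk _ (A.op f fun i => (x i).out)).out = _
  rw [firstIso_mk hh, hh]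

theorem firstIso_inj {A B : Type} (h : A → B) :
    Function.Injective fun q : Quot (fun a b => h a = h b) => h q.out := by
  intro q q' hq
  rw [← q.out_eq, ← q'.out_eq]
  exact Quot.sound hq

theorem finGen_of_surj {A B : Alg σ} (hA : FinGen A) {h : A.carrier → B.carrier}
    (hh : IsHom A B h) (hs : Function.Surjective h) : FinGen B := by
  obtain ⟨S, hSf, hSg⟩ := hA
  refine ⟨h '' S, hSf.image h, fun b => ?_⟩
  obtain ⟨a, rfl⟩ := hs b
  have key : ∀ a, InClosure A S a → InClosure B (h '' S) (h a) := by
    intro a ha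
    induction ha with
    | base a haS => exact .base _ ⟨a, haS, rfl⟩
    | app f x hx ih => rw [hh]; exact .app f _ ih
  exact key a (hSg a)

def trmAlg (σ : Signature) (k : ℕ) : Alg σ where
  carrier := Trm σ (k + 1)
  nonempty := ⟨Trm.var 0⟩
  op := Trm.app

theorem freeCon_equiv (C : Set (Alg σ)) (n : ℕ) : Equivalence (FreeCon C n) :=
  ⟨fun _ _ _ _ => rfl, fun h A hA v => (h A hA v).symm,
   fun h₁ h₂ A hA v => (h₁ A hA v).trans (h₂ A hA v)⟩

theorem freeCon_cong (C : Set (Alg σ)) (k : ℕ) :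
    IsCongruence (trmAlg σ k) (FreeCon C (k + 1)) := by
  refine ⟨freeCon_equiv C _, fun f x y hxy A hA v => ?_⟩
  show Trm.eval A v (Trm.app f x) = Trm.eval A v (Trm.app f y)
  show A.op f (fun i => Trm.eval A v (x i)) = A.op f fun i => Trm.eval A v (y i)
  exact congrArg _ (funext fun i => hxy i A hA v)

theorem freeMk_isHom (C : Set (Alg σ)) (k : ℕ) :
    IsHom (trmAlg σ k) (freeAlg C k) (Quot.mk (FreeCon C (k + 1))) :=
  quot_mk_isHom (freeCon_cong C k)

theorem freeMk_app (C : Set (Alg σ)) (k : ℕ) (f : σ.F)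
    (ts : Fin (σ.arity f) → Trm σ (k + 1)) :
    (Quot.mk (FreeCon C (k + 1)) (Trm.app f ts) : (freeAlg C k).carrier)
      = (freeAlg C k).op f fun i => Quot.mk _ (ts i) :=
  freeMk_isHom C k f ts

theorem freeAlg_finGen (C : Set (Alg σ)) (k : ℕ) : FinGen (freeAlg C k) := by
  refine ⟨Set.range fun i : Fin (k + 1) => (Quot.mk (FreeCon C (k + 1)) (Trm.var i) :
    (freeAlg C k).carrier), Set.finite_range _, fun a => ?_⟩
  induction a using Quot.ind with
  | _ t =>
    induction t with
    | var i => exact .base _ ⟨i, rfl⟩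
    | app f ts ih => rw [freeMk_app]; exact .app f _ ih

def subst {k m : ℕ} (u : Fin m → Trm σ k) : Trm σ m → Trm σ k
  | .var i => u i
  | .app f ts => .app f fun i => subst u (ts i)

theorem eval_subst {k m : ℕ} (A : Alg σ) (v : Fin k → A.carrier) (u : Fin m → Trm σ k)
    (s : Trm σ m) : (subst u s).eval A v = s.eval A fun i => (u i).eval A v := by
  induction s with
  | var i => rfl
  | app f ts ih =>
    show A.op f (fun i => Trm.eval A v (subst u (ts i))) = A.op f fun i => _
    exact congrArg _ (funext ih)

theorem freeCon_subst {C : Set (Alg σ)} {k m : ℕ} (u : Fin (m + 1) → Trm σ (k + 1))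
    {s s' : Trm σ (m + 1)} (h : FreeCon C (m + 1) s s') :
    FreeCon C (k + 1) (subst u s) (subst u s') := by
  intro A hA v
  rw [eval_subst, eval_subst]
  exact h A hA _

theorem eval_free {C : Set (Alg σ)} {k m : ℕ} (t : Fin (m + 1) → (freeAlg C k).carrier)
    (s : Trm σ (m + 1)) :
    s.eval (freeAlg C k) t = Quot.mk _ (subst (fun j => (t j).out) s) := by
  induction s with
  | var j => exact (t j).out_eq.symm
  | app f ts ih =>
    show (freeAlg C k).op f (fun i => Trm.eval (freeAlg C k) t (ts i)) = _
    have h1 : (fun i => Trm.eval (freeAlg C k) t (ts i))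
        = fun i => (Quot.mk (FreeCon C (k + 1)) (subst (fun j => (t j).out) (ts i)) :
          (freeAlg C k).carrier) := funext ih
    rw [h1, ← freeMk_app]
    rfl

theorem eval_free_congr {C : Set (Alg σ)} {k m : ℕ} (t : Fin (m + 1) → (freeAlg C k).carrier)
    {s s' : Trm σ (m + 1)} (h : FreeCon C (m + 1) s s') :
    s.eval (freeAlg C k) t = s'.eval (freeAlg C k) t := by
  rw [eval_free, eval_free]
  exact Quot.sound (freeCon_subst _ h)

noncomputable def substHom (C : Set (Alg σ)) {k m : ℕ}
    (t : Fin (m + 1) → (freeAlg C k).carrier) :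
    (freeAlg C m).carrier → (freeAlg C k).carrier :=
  fun q => Trm.eval (freeAlg C k) t q.out

theorem substHom_isHom (C : Set (Alg σ)) {k m : ℕ} (t : Fin (m + 1) → (freeAlg C k).carrier) :
    IsHom (freeAlg C m) (freeAlg C k) (substHom C t) := by
  intro f x
  show Trm.eval _ t (Quot.mk (FreeCon C (m + 1)) (Trm.app f fun i => (x i).out)).out = _
  rw [eval_free_congr t (quot_out_rel (freeCon_equiv C (m + 1)) _)]
  rfl

theorem substHom_var (C : Set (Alg σ)) {k m : ℕ} (t : Fin (m + 1) → (freeAlg C k).carrier)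
    (j : Fin (m + 1)) : substHom C t (Quot.mk (FreeCon C (m + 1)) (Trm.var j)) = t j := by
  show Trm.eval _ t (Quot.mk (FreeCon C (m + 1)) (Trm.var j)).out = t j
  rw [eval_free_congr t (quot_out_rel (freeCon_equiv C (m + 1)) _)]
  rfl

theorem conSubstRel_isCong {V : Set (Alg σ)} {k m : ℕ} (θ : Cong (freeAlg V k))
    (t : Fin (m + 1) → (freeAlg V k).carrier) :
    IsCongruence (freeAlg V m) (conSubstRel θ t) := by
  constructor
  · exact ⟨fun _ => θ.iscon.1.refl _, fun h => θ.iscon.1.symm h,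
      fun h h' => θ.iscon.1.trans h h'⟩
  · intro f x y hxy
    show θ.r (substHom V t ((freeAlg V m).op f x)) (substHom V t ((freeAlg V m).op f y))
    rw [substHom_isHom V t f x, substHom_isHom V t f y]
    exact θ.iscon.2 _ _ _ hxy

theorem hom_ext {C : Set (Alg σ)} {m : ℕ} {D : Alg σ}
    {g₁ g₂ : (freeAlg C m).carrier → D.carrier}
    (h₁ : IsHom (freeAlg C m) D g₁) (h₂ : IsHom (freeAlg C m) D g₂)
    (hv : ∀ j, g₁ (Quot.mk (FreeCon C (m + 1)) (Trm.var j))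
      = g₂ (Quot.mk (FreeCon C (m + 1)) (Trm.var j))) : g₁ = g₂ := by
  funext q
  induction q using Quot.ind with
  | _ s =>
    induction s with
    | var j => exact hv j
    | app f ts ih =>
      rw [freeMk_app]
      exact (h₁ f _).trans ((congrArg _ (funext ih)).trans (h₂ f _).symm)

theorem hom_into_quot {V : Set (Alg σ)} {k m : ℕ} (θ : Cong (freeAlg V k))
    {g : (freeAlg V m).carrier → Quot θ.r}
    (hg : IsHom (freeAlg V m) (quotAlg (freeAlg V k) θ.r) g) :
    ∃ t : Fin (m + 1) → (freeAlg V k).carrier,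
      conSubstRel θ t = fun s s' => g s = g s' := by
  refine ⟨fun j => (g (Quot.mk _ (Trm.var j))).out, ?_⟩
  have hfac : g = Quot.mk θ.r ∘ substHom V (fun j => (g (Quot.mk _ (Trm.var j))).out) := by
    apply hom_ext hg (isHom_comp (substHom_isHom V _) (quot_mk_isHom θ.iscon))
    intro j
    show g _ = Quot.mk θ.r (substHom V _ (Quot.mk _ (Trm.var j)))
    rw [substHom_var]
    exact (Quot.out_eq _).symm
  funext s s'
  rw [congrFun hfac s, congrFun hfac s']
  apply propext
  constructor
  · intro hrel
    exact Quot.sound hrel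
  · intro he
    exact (quot_mk_eq_iff θ.iscon.1).mp he

theorem Cong.ext' {A : Alg σ} {θ₁ θ₂ : Cong A} (h : θ₁.r = θ₂.r) : θ₁ = θ₂ := by
  cases θ₁; cases θ₂; cases h; rfl

theorem freeAlg_mem {V : Set (Alg σ)} (hV : IsVariety V) (k : ℕ) : freeAlg V k ∈ V := by
  classical
  have hsep : ∀ i : {p : Trm σ (k + 1) × Trm σ (k + 1) // ¬ FreeCon V (k + 1) p.1 p.2},
      ∃ A ∈ V, ∃ v : Fin (k + 1) → A.carrier,
        Trm.eval A v i.1.1 ≠ Trm.eval A v i.1.2 := by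
    intro i
    by_contra hc
    push_neg at hc
    exact i.2 fun A hA v => hc A hA v
  choose W hW vv hvv using hsep
  apply hV.2.1
  refine ⟨PiAlg W, hV.1 _ W hW, fun q i => Trm.eval (W i) (vv i) q.out, ?_, ?_⟩
  · intro f x
    funext i
    show Trm.eval (W i) (vv i)
        (Quot.mk (FreeCon V (k + 1)) (Trm.app f fun j => (x j).out)).out = _
    rw [quot_out_rel (freeCon_equiv V (k + 1)) (Trm.app f fun j => (x j).out) (W i) (hW i) (vv i)]
    rfl
  · intro q q' hqq
    have hfc : FreeCon V (k + 1) q.out q'.out := by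
      by_contra hc
      exact hvv ⟨(q.out, q'.out), hc⟩ (congrFun hqq ⟨(q.out, q'.out), hc⟩)
    rw [← q.out_eq, ← q'.out_eq]
    exact Quot.sound hfc

theorem mem_of_iso {V : Set (Alg σ)} (hV : IsVariety V) {A B : Alg σ} (hA : A ∈ V)
    (h : Isomorphic A B) : B ∈ V := by
  obtain ⟨f, hf, hb⟩ := h
  exact hV.2.2 ⟨A, hA, f, hf, hb.2⟩

theorem quot_cong_mem {V : Set (Alg σ)} (hV : IsVariety V) {k : ℕ} (θ : Cong (freeAlg V k)) :
    quotAlg (freeAlg V k) θ.r ∈ V :=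
  hV.2.2 ⟨freeAlg V k, freeAlg_mem hV k, Quot.mk θ.r, quot_mk_isHom θ.iscon, quot_mk_surj⟩

theorem quot_cong_finGen {V : Set (Alg σ)} {k : ℕ} (θ : Cong (freeAlg V k)) :
    FinGen (quotAlg (freeAlg V k) θ.r) :=
  finGen_of_surj (freeAlg_finGen V k) (quot_mk_isHom θ.iscon) quot_mk_surj

theorem inClosure_mono {A : Alg σ} {S T : Set A.carrier} (hST : S ⊆ T) {a : A.carrier}
    (h : InClosure A S a) : InClosure A T a := by
  induction h with
  | base a haS => exact .base _ (hST haS)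
  | app f x hx ih => exact .app f _ ih

theorem exists_gen_tuple {A : Alg σ} (h : FinGen A) :
    ∃ (k : ℕ) (a : Fin (k + 1) → A.carrier), ∀ b, InClosure A (Set.range a) b := by
  classical
  obtain ⟨S, hSf, hSg⟩ := h
  obtain ⟨l, hl⟩ : ∃ l : List A.carrier, ∀ s ∈ S, s ∈ l :=
    ⟨hSf.toFinset.toList, fun s hs => by simpa using hs⟩
  refine ⟨l.length, fun i => if hi : (i : ℕ) < l.length then l.get ⟨i, hi⟩
    else Classical.choice A.nonempty, fun b => ?_⟩
  apply inClosure_mono _ (hSg b)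
  intro s hs
  obtain ⟨i, hi⟩ := List.mem_iff_get.mp (hl s hs)
  refine ⟨⟨i.1, Nat.lt_succ_of_lt i.2⟩, ?_⟩
  show (if h : _ then _ else _) = s
  rw [dif_pos i.2]
  exact hi

theorem exists_surj_hom {V : Set (Alg σ)} {A : Alg σ} (hA : A ∈ V) (hfg : FinGen A) :
    ∃ (k : ℕ) (h : (freeAlg V k).carrier → A.carrier),
      IsHom (freeAlg V k) A h ∧ Function.Surjective h := by
  obtain ⟨k, a, hgen⟩ := exists_gen_tuple hfg
  refine ⟨k, fun q => Trm.eval A a q.out, ?_, ?_⟩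
  · intro f x
    show Trm.eval A a (Quot.mk (FreeCon V (k + 1)) (Trm.app f fun i => (x i).out)).out = _
    rw [quot_out_rel (freeCon_equiv V (k + 1)) (Trm.app f fun i => (x i).out) A hA a]
    rfl
  · intro b
    induction hgen b with
    | base s hs =>
      obtain ⟨i, rfl⟩ := hs
      refine ⟨Quot.mk _ (Trm.var i), ?_⟩
      show Trm.eval A a (Quot.mk (FreeCon V (k + 1)) (Trm.var i)).out = a i
      rw [quot_out_rel (freeCon_equiv V (k + 1)) (Trm.var i) A hA a]
      rfl
    | app f x hx ih =>
      choose q hq using ih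
      refine ⟨(freeAlg V k).op f q, ?_⟩
      show Trm.eval A a (Quot.mk (FreeCon V (k + 1)) (Trm.app f fun i => (q i).out)).out = _
      rw [quot_out_rel (freeCon_equiv V (k + 1)) (Trm.app f fun i => (q i).out) A hA a]
      show A.op f (fun i => Trm.eval A a (q i).out) = A.op f x
      exact congrArg _ (funext hq)

theorem quot_ker_mem {V K : Set (Alg σ)} (hSPf : SPf K = K) {k n : ℕ}
    {A : Fin (n + 1) → Alg σ} (hA : ∀ i, A i ∈ K)
    {h : (freeAlg V k).carrier → (PiAlg A).carrier}
    (hh : IsHom (freeAlg V k) (PiAlg A) h) :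
    quotAlg (freeAlg V k) (fun a b => h a = h b) ∈ Icl K := by
  classical
  have hcl : ∀ (f : σ.F) (x : Fin (σ.arity f) → (PiAlg A).carrier),
      (∀ i, x i ∈ Set.range h) → (PiAlg A).op f x ∈ Set.range h := by
    intro f x hx
    choose a ha using hx
    refine ⟨(freeAlg V k).op f a, ?_⟩
    rw [hh]
    exact congrArg _ (funext ha)
  have hne : (Set.range h).Nonempty := ⟨h (Quot.mk _ (Trm.var 0)), Set.mem_range_self _⟩
  have hSubK : subAlg (PiAlg A) (Set.range h) hne hcl ∈ K := by
    rw [← hSPf]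
    refine ⟨?_, n, A, hA, Subtype.val, fun f x => rfl, Subtype.val_injective⟩
    exact finGen_of_surj (freeAlg_finGen V k)
      (h := fun q => (⟨h q, Set.mem_range_self q⟩ :
        (subAlg (PiAlg A) (Set.range h) hne hcl).carrier))
      (fun f x => Subtype.ext (hh f x))
      (fun b => ⟨b.2.choose, Subtype.ext b.2.choose_spec⟩)
  refine ⟨_, hSubK, iso_symm ⟨fun q => ⟨h q.out, Set.mem_range_self _⟩, ?_, ?_, ?_⟩⟩
  · intro f x
    refine Subtype.ext ?_
    show h (Quot.mk _ ((freeAlg V k).op f fun i => (x i).out)).out = _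
    rw [firstIso_mk hh, hh]
    rfl
  · intro q q' hqq
    exact firstIso_inj h (congrArg Subtype.val hqq)
  · rintro ⟨b, a, rfl⟩
    exact ⟨Quot.mk _ a, Subtype.ext (firstIso_mk hh a)⟩

theorem mem_SPf_single {K : Set (Alg σ)} {A B : Alg σ} (hA : A ∈ K) (hfg : FinGen B)
    (h : Isomorphic A B) : B ∈ SPf K := by
  obtain ⟨f, hf, hb⟩ := iso_symm h
  refine ⟨hfg, 0, fun _ => A, fun _ => hA, fun b _ => f b, ?_, ?_⟩
  · intro g x
    funext i
    exact hf g x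
  · intro b b' hb'
    exact hb.1 (congrFun hb' 0)

theorem isHom_diag {B A : Alg σ} {h : B.carrier → A.carrier} (hh : IsHom B A h) :
    IsHom B (PiAlg fun _ : Fin 1 => A) fun b _ => h b := by
  intro f x
  funext i
  exact hh f x

end CorrespondenceProof

/-- Proposition 4 of the paper. The assignments `K ↦ B^K` and
`B ↦ K^B` establish a one-to-one correspondence between the subclasses of `V_fg`
closed under finitely generated subalgebras of finite products and the subfamilies
of `Con(F^V)` closed under inverse substitution and finite intersection. -/
theorem correspondence_SPf {σ : Signature} (V : Set (Alg σ)) (hV : IsVariety V) :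
    (∀ K : Set (Alg σ), K ⊆ Vfg V → SPf K = K →
      (InvSubstClosed V (BK V K) ∧ InterClosed V (BK V K)) ∧ KB V (BK V K) = K) ∧
    (∀ B : ∀ k : ℕ, Set (Cong (freeAlg V k)),
      InvSubstClosed V B → InterClosed V B →
      (KB V B ⊆ Vfg V ∧ SPf (KB V B) = KB V B) ∧ ∀ k : ℕ, BK V (KB V B) k = B k) := by
  constructor
  · -- Part 1
    intro K hKsub hSPf
    refine ⟨⟨?_, ?_⟩, ?_⟩
    · -- InvSubstClosed V (BK V K)
      intro k m θ hθ t
      obtain ⟨A, hAK, f, hf, hfb⟩ := hθ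
      obtain ⟨g, hg, hgb, -, -⟩ := isHom_inv hf hfb
      refine ⟨⟨conSubstRel θ t, conSubstRel_isCong θ t⟩, ?_, rfl⟩
      show quotAlg (freeAlg V m) (conSubstRel θ t) ∈ Icl K
      have hmaph : IsHom (freeAlg V m) (PiAlg fun _ : Fin 1 => A)
          (fun s _ => g (Quot.mk θ.r (substHom V t s))) :=
        isHom_diag (isHom_comp (isHom_comp (substHom_isHom V t) (quot_mk_isHom θ.iscon)) hg)
      have hker : conSubstRel θ t = fun a b =>
          (fun s (_ : Fin 1) => g (Quot.mk θ.r (substHom V t s))) a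
            = (fun s (_ : Fin 1) => g (Quot.mk θ.r (substHom V t s))) b := by
        funext a b
        apply propext
        constructor
        · intro hrel
          funext i
          show g (Quot.mk θ.r (substHom V t a)) = g (Quot.mk θ.r (substHom V t b))
          exact congrArg g (Quot.sound hrel)
        · intro he
          exact (quot_mk_eq_iff θ.iscon.1).mp (hgb.1 (congrFun he 0))
      rw [hker]
      exact quot_ker_mem hSPf (fun _ => hAK) hmaph
    · -- InterClosed V (BK V K)
      intro k n θs hθs
      have hinv : ∀ i, ∃ A ∈ K, ∃ g : Quot (θs i).r → A.carrier,
          IsHom (quotAlg (freeAlg V k) (θs i).r) A g ∧ Function.Injective g := by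
        intro i
        obtain ⟨A, hAK, f, hf, hfb⟩ := hθs i
        obtain ⟨g, hg, hgb, -, -⟩ := isHom_inv hf hfb
        exact ⟨A, hAK, g, hg, hgb.1⟩
      choose A hAK g hg hginj using hinv
      refine ⟨⟨fun a b => ∀ i, (θs i).r a b, ⟨⟨fun a i => (θs i).iscon.1.refl a,
        fun h i => (θs i).iscon.1.symm (h i),
        fun h h' i => (θs i).iscon.1.trans (h i) (h' i)⟩,
        fun f x y hxy i => (θs i).iscon.2 f x y fun j => hxy j i⟩⟩, ?_, rfl⟩
      show quotAlg (freeAlg V k) (fun a b => ∀ i, (θs i).r a b) ∈ Icl K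
      have hmaph : IsHom (freeAlg V k) (PiAlg A)
          (fun q i => g i (Quot.mk (θs i).r q)) := by
        intro f x
        funext i
        show g i (Quot.mk (θs i).r ((freeAlg V k).op f x))
          = (A i).op f fun j => g i (Quot.mk (θs i).r (x j))
        rw [quot_mk_isHom (θs i).iscon f x]
        exact hg i f _
      have hker : (fun a b => ∀ i, (θs i).r a b) = fun a b =>
          (fun q i => g i (Quot.mk (θs i).r q)) a
            = (fun q i => g i (Quot.mk (θs i).r q)) b := by
        funext a b
        apply propext
        constructor
        · intro hrel
          funext i
          show g i (Quot.mk (θs i).r a) = g i (Quot.mk (θs i).r b)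
          exact congrArg (g i) (Quot.sound (hrel i))
        · intro he i
          exact (quot_mk_eq_iff (θs i).iscon.1).mp (hginj i (congrFun he i))
      rw [hker]
      exact quot_ker_mem hSPf hAK hmaph
    · -- KB V (BK V K) = K
      apply Set.Subset.antisymm
      · rintro Bq ⟨D, ⟨k, θ, hθ, rfl⟩, hiso⟩
        obtain ⟨A, hAK, hAiso⟩ := hθ
        have hiso2 : Isomorphic A Bq := iso_trans hAiso hiso
        have hfg : FinGen Bq := by
          obtain ⟨f, hf, hfb⟩ := hiso2
          exact finGen_of_surj (hKsub hAK).2 hf hfb.2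
        rw [← hSPf]
        exact mem_SPf_single hAK hfg hiso2
      · intro A hAK
        obtain ⟨k, h, hh, hs⟩ := exists_surj_hom (hKsub hAK).1 (hKsub hAK).2
        have hiso : Isomorphic (quotAlg (freeAlg V k) fun a b => h a = h b) A := by
          refine ⟨fun q => h q.out, firstIso_isHom hh, firstIso_inj h, fun b => ?_⟩
          obtain ⟨a, rfl⟩ := hs b
          exact ⟨Quot.mk _ a, firstIso_mk hh a⟩
        exact ⟨quotAlg (freeAlg V k) fun a b => h a = h b,
          ⟨k, ⟨fun a b => h a = h b, ker_isCong hh⟩, ⟨A, hAK, iso_symm hiso⟩, rfl⟩, hiso⟩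
  · -- Part 2
    intro B hInv hInter
    have hKBsub : KB V B ⊆ Vfg V := by
      rintro Bq ⟨D, ⟨k, θ, hθ, rfl⟩, hiso⟩
      refine ⟨mem_of_iso hV (quot_cong_mem hV θ) hiso, ?_⟩
      obtain ⟨f, hf, hfb⟩ := hiso
      exact finGen_of_surj (quot_cong_finGen θ) hf hfb.2
    have key : SPf (KB V B) ⊆ KB V B := by
      rintro Cq ⟨hCfg, n, A, hA, e, he, heinj⟩
      have hCV : Cq ∈ V :=
        hV.2.1 ⟨PiAlg A, hV.1 _ A (fun i => (hKBsub (hA i)).1), e, he, heinj⟩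
      obtain ⟨m, h, hh, hs⟩ := exists_surj_hom hCV hCfg
      have hAi : ∀ i, ∃ (ki : ℕ) (ψ : Cong (freeAlg V ki)), ψ ∈ B ki ∧
          ∃ g : (A i).carrier → Quot ψ.r,
            IsHom (A i) (quotAlg (freeAlg V ki) ψ.r) g ∧ Function.Injective g := by
        intro i
        obtain ⟨D, ⟨ki, ψ, hψ, rfl⟩, f, hf, hfb⟩ := hA i
        obtain ⟨g, hg, hgb, -, -⟩ := isHom_inv hf hfb
        exact ⟨ki, ψ, hψ, g, hg, hgb.1⟩
      choose ki ψ hψ g hg hginj using hAi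
      have hGhom : ∀ i, IsHom (freeAlg V m) (quotAlg (freeAlg V (ki i)) (ψ i).r)
          (fun q => g i (e (h q) i)) := by
        intro i f x
        show g i (e (h ((freeAlg V m).op f x)) i)
          = (quotAlg (freeAlg V (ki i)) (ψ i).r).op f fun j => g i (e (h (x j)) i)
        rw [hh f x, he f]
        exact hg i f _
      have hGi : ∀ i, ∃ θi ∈ B m,
          θi.r = fun a b => g i (e (h a) i) = g i (e (h b) i) := by
        intro i
        obtain ⟨t, ht⟩ := hom_into_quot (ψ i) (hGhom i)
        obtain ⟨θi, hθiB, hθir⟩ := hInv (ki i) m (ψ i) (hψ i) t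
        exact ⟨θi, hθiB, by rw [hθir, ht]⟩
      choose θi hθiB hθir using hGi
      obtain ⟨θstar, hθsB, hθsr⟩ := hInter m n θi hθiB
      have hker : θstar.r = fun a b => h a = h b := by
        rw [hθsr]
        funext a b
        apply propext
        constructor
        · intro hi
          apply heinj
          funext i
          apply hginj i
          have h2 := hi i
          rw [hθir i] at h2
          exact h2
        · intro hab i
          rw [hθir i]
          show g i (e (h a) i) = g i (e (h b) i)
          rw [hab]
      refine ⟨quotAlg (freeAlg V m) θstar.r, ⟨m, θstar, hθsB, rfl⟩, ?_⟩
      rw [hker]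
      refine ⟨fun q => h q.out, firstIso_isHom hh, firstIso_inj h, fun b => ?_⟩
      obtain ⟨a, rfl⟩ := hs b
      exact ⟨Quot.mk _ a, firstIso_mk hh a⟩
    refine ⟨⟨hKBsub, Set.Subset.antisymm key ?_⟩, ?_⟩
    · -- KB V B ⊆ SPf (KB V B)
      intro Cq hC
      refine ⟨(hKBsub hC).2, 0, fun _ => Cq, fun _ => hC, fun c _ => c, ?_, ?_⟩
      · intro f x
        funext i
        rfl
      · intro a b hab
        exact congrFun hab 0
    · -- BK V (KB V B) = B
      intro k
      apply Set.Subset.antisymm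
      · intro θ hθ
        obtain ⟨Cq, hCq, f, hf, hfb⟩ := hθ
        obtain ⟨D, ⟨m, ψ, hψ, rfl⟩, f2, hf2, hf2b⟩ := hCq
        obtain ⟨g, hg, hgb, -, -⟩ := isHom_inv (isHom_comp hf2 hf) (hfb.comp hf2b)
        have hGhom : IsHom (freeAlg V k) (quotAlg (freeAlg V m) ψ.r)
            (fun q => g (Quot.mk θ.r q)) := isHom_comp (quot_mk_isHom θ.iscon) hg
        obtain ⟨t, ht⟩ := hom_into_quot ψ hGhom
        obtain ⟨θ', hθ'B, hθ'r⟩ := hInv m k ψ hψ t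
        have hEq : θ' = θ := by
          apply Cong.ext'
          rw [hθ'r, ht]
          funext a b
          apply propext
          constructor
          · intro hgg
            exact (quot_mk_eq_iff θ.iscon.1).mp (hgb.1 hgg)
          · intro hr
            exact congrArg g (Quot.sound hr)
        rw [← hEq]
        exact hθ'B
      · intro θ hθB
        exact ⟨quotAlg (freeAlg V k) θ.r,
          ⟨quotAlg (freeAlg V k) θ.r, ⟨k, θ, hθB, rfl⟩, iso_refl _⟩, iso_refl _⟩
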